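/- Let λ > 0, L > 0, and let f : ℝ → ℝ be monotone and CFL-compatible for λ and Lipschitz with constant L, i.e. 0 ≤ f(b) − f(a) ≤ min(L(b−a), (b−a)/λ) for all a ≤ b. Let u : ℤ × ℕ → ℝ (written u_j^n) satisfy the upwind relation u_j^{n+1} = u_j^n − λ(f(u_j^n) − f(u_{j−1}^n)) for all j ∈ ℤ and all n ≥ 0, and suppose the discrete total variation of the initial data satisfies ∑_{j∈ℤ} |u_j^0 − u_{j−1}^0| ≤ V < ∞. Then the scheme is Lipschitz continuous in time in the discrete L¹ sense: for all natural numbers n ≤ m, ∑_{j∈ℤ} |u_j^m − u_j^n| ≤ (m − n)·λ·L·V, the sum being taken in [0,∞]. -/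

import Mathlib

open scoped ENNReal

/-- discrete L¹ Lipschitz continuity in time of the upwind
scheme: between time levels `n ≤ m` the discrete L¹ distance is bounded by
`(m - n) · λ · L · V`, where `V` bounds the discrete total variation of the
initial data. -/
theorem upwind_lipschitz_in_time
    (lam L : ℝ) (hlam : 0 < lam) (hL : 0 < L) (f : ℝ → ℝ)
    (hf : ∀ a b : ℝ, a ≤ b →
      0 ≤ f b - f a ∧ f b - f a ≤ min (L * (b - a)) ((b - a) / lam))
    (u : ℤ × ℕ → ℝ)
    (hscheme : ∀ (j : ℤ) (n : ℕ),
      u (j, n + 1) = u (j, n) - lam * (f (u (j, n)) - f (u (j - 1, n))))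
    (V : ℝ)
    (hTV : ∑' j : ℤ, ENNReal.ofReal |u (j, 0) - u (j - 1, 0)| ≤ ENNReal.ofReal V) :
    ∀ n m : ℕ, n ≤ m →
      ∑' j : ℤ, ENNReal.ofReal |u (j, m) - u (j, n)| ≤
        ENNReal.ofReal (((m - n : ℕ) : ℝ) * lam * L * V) := by
  -- pointwise key facts about the flux
  have hkey : ∀ x y : ℝ, |f y - f x| ≤ L * |y - x| ∧
      |(y - x) - lam * (f y - f x)| = |y - x| - lam * |f y - f x| := by
    intro x y
    rcases le_total x y with h | h
    · obtain ⟨h0, h1⟩ := hf x y h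
      have hbL := h1.trans (min_le_left _ _)
      have hbC := (le_div_iff₀ hlam).mp (h1.trans (min_le_right _ _))
      have hyx : (0:ℝ) ≤ y - x := sub_nonneg.mpr h
      rw [abs_of_nonneg h0, abs_of_nonneg hyx,
        abs_of_nonneg (by nlinarith : (0:ℝ) ≤ (y - x) - lam * (f y - f x))]
      exact ⟨hbL, rfl⟩
    · obtain ⟨h0, h1⟩ := hf y x h
      have hbL := h1.trans (min_le_left _ _)
      have hbC := (le_div_iff₀ hlam).mp (h1.trans (min_le_right _ _))
      have hyx : y - x ≤ 0 := sub_nonpos.mpr h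
      have hb0 : f y - f x ≤ 0 := by linarith
      rw [abs_of_nonpos hb0, abs_of_nonpos hyx,
        abs_of_nonpos (by nlinarith : (y - x) - lam * (f y - f x) ≤ 0)]
      exact ⟨by nlinarith, by ring⟩
  -- total variation at each level
  set T : ℕ → ℝ≥0∞ := fun n => ∑' j : ℤ, ENNReal.ofReal |u (j, n) - u (j - 1, n)| with hT
  -- TV is non-increasing
  have hTVmono : ∀ n, T (n + 1) ≤ T n := by
    intro n
    set g : ℤ → ℝ := fun j => lam * |f (u (j, n)) - f (u (j - 1, n))| with hg
    have hnn : ∀ j : ℤ, 0 ≤ |u (j, n) - u (j - 1, n)| - g j := by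
      intro j
      have := (hkey (u (j - 1, n)) (u (j, n))).2
      have := abs_nonneg ((u (j, n) - u (j - 1, n)) -
        lam * (f (u (j, n)) - f (u (j - 1, n))))
      simp only [hg]
      linarith
    have hstep : ∀ j : ℤ, ENNReal.ofReal |u (j, n + 1) - u (j - 1, n + 1)| ≤
        ENNReal.ofReal (|u (j, n) - u (j - 1, n)| - g j) + ENNReal.ofReal (g (j - 1)) := by
      intro j
      have e : u (j, n + 1) - u (j - 1, n + 1) =
          ((u (j, n) - u (j - 1, n)) - lam * (f (u (j, n)) - f (u (j - 1, n))))
            + lam * (f (u (j - 1, n)) - f (u (j - 1 - 1, n))) := by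
        rw [hscheme j n, hscheme (j - 1) n]; ring
      have habs : |u (j, n + 1) - u (j - 1, n + 1)| ≤
          (|u (j, n) - u (j - 1, n)| - g j) + g (j - 1) := by
        rw [e]
        refine (abs_add_le _ _).trans ?_
        have h1 := (hkey (u (j - 1, n)) (u (j, n))).2
        have h2 : |lam * (f (u (j - 1, n)) - f (u (j - 1 - 1, n)))| = g (j - 1) := by
          simp only [hg, abs_mul, abs_of_pos hlam]
        simp only [hg] at h1 ⊢
        rw [h1, h2]
      calc ENNReal.ofReal |u (j, n + 1) - u (j - 1, n + 1)|
          ≤ ENNReal.ofReal ((|u (j, n) - u (j - 1, n)| - g j) + g (j - 1)) :=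
            ENNReal.ofReal_le_ofReal habs
        _ ≤ _ := ENNReal.ofReal_add_le
    calc T (n + 1) ≤ ∑' j : ℤ, (ENNReal.ofReal (|u (j, n) - u (j - 1, n)| - g j)
          + ENNReal.ofReal (g (j - 1))) := ENNReal.tsum_le_tsum hstep
      _ = (∑' j : ℤ, ENNReal.ofReal (|u (j, n) - u (j - 1, n)| - g j))
          + ∑' j : ℤ, ENNReal.ofReal (g (j - 1)) := ENNReal.tsum_add
      _ = (∑' j : ℤ, ENNReal.ofReal (|u (j, n) - u (j - 1, n)| - g j))
          + ∑' j : ℤ, ENNReal.ofReal (g j) := by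
            congr 1
            exact ((Equiv.subRight (1 : ℤ)).tsum_eq fun j => ENNReal.ofReal (g j))
      _ = ∑' j : ℤ, (ENNReal.ofReal (|u (j, n) - u (j - 1, n)| - g j)
          + ENNReal.ofReal (g j)) := ENNReal.tsum_add.symm
      _ = T n := by
            apply tsum_congr
            intro j
            rw [← ENNReal.ofReal_add (hnn j) (by positivity)]
            ring_nf
  -- TV bounded by V for all n
  have hTVall : ∀ n, T n ≤ ENNReal.ofReal V := by
    intro n
    induction n with
    | zero => exact hTV
    | succ k ih => exact (hTVmono k).trans ih
  -- one-step L¹ bound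
  have hone : ∀ n, (∑' j : ℤ, ENNReal.ofReal |u (j, n + 1) - u (j, n)|) ≤
      ENNReal.ofReal (lam * L) * ENNReal.ofReal V := by
    intro n
    have hpt : ∀ j : ℤ, ENNReal.ofReal |u (j, n + 1) - u (j, n)| ≤
        ENNReal.ofReal (lam * L) * ENNReal.ofReal |u (j, n) - u (j - 1, n)| := by
      intro j
      rw [← ENNReal.ofReal_mul (by positivity)]
      apply ENNReal.ofReal_le_ofReal
      have e : u (j, n + 1) - u (j, n) = -(lam * (f (u (j, n)) - f (u (j - 1, n)))) := by
        rw [hscheme j n]; ring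
      rw [e, abs_neg, abs_mul, abs_of_pos hlam]
      have := (hkey (u (j - 1, n)) (u (j, n))).1
      nlinarith
    calc (∑' j : ℤ, ENNReal.ofReal |u (j, n + 1) - u (j, n)|)
        ≤ ∑' j : ℤ, ENNReal.ofReal (lam * L) * ENNReal.ofReal |u (j, n) - u (j - 1, n)| :=
          ENNReal.tsum_le_tsum hpt
      _ = ENNReal.ofReal (lam * L) * T n := ENNReal.tsum_mul_left
      _ ≤ _ := mul_le_mul_right (hTVall n) _
  -- induction over number of steps
  have hmain : ∀ n k : ℕ, (∑' j : ℤ, ENNReal.ofReal |u (j, n + k) - u (j, n)|) ≤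
      (k : ℝ≥0∞) * (ENNReal.ofReal (lam * L) * ENNReal.ofReal V) := by
    intro n k
    induction k with
    | zero => simp
    | succ k ih =>
      have hpt : ∀ j : ℤ, ENNReal.ofReal |u (j, n + (k + 1)) - u (j, n)| ≤
          ENNReal.ofReal |u (j, n + k + 1) - u (j, n + k)|
            + ENNReal.ofReal |u (j, n + k) - u (j, n)| := by
        intro j
        have : |u (j, n + (k + 1)) - u (j, n)| ≤
            |u (j, n + k + 1) - u (j, n + k)| + |u (j, n + k) - u (j, n)| := by
          have : n + (k + 1) = n + k + 1 := by ring
          rw [this]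
          exact abs_sub_le _ _ _
        exact (ENNReal.ofReal_le_ofReal this).trans ENNReal.ofReal_add_le
      calc (∑' j : ℤ, ENNReal.ofReal |u (j, n + (k + 1)) - u (j, n)|)
          ≤ ∑' j : ℤ, (ENNReal.ofReal |u (j, n + k + 1) - u (j, n + k)|
            + ENNReal.ofReal |u (j, n + k) - u (j, n)|) := ENNReal.tsum_le_tsum hpt
        _ = (∑' j : ℤ, ENNReal.ofReal |u (j, n + k + 1) - u (j, n + k)|)
            + ∑' j : ℤ, ENNReal.ofReal |u (j, n + k) - u (j, n)| := ENNReal.tsum_add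
        _ ≤ ENNReal.ofReal (lam * L) * ENNReal.ofReal V
            + (k : ℝ≥0∞) * (ENNReal.ofReal (lam * L) * ENNReal.ofReal V) :=
              add_le_add (hone (n + k)) ih
        _ = ((k + 1 : ℕ) : ℝ≥0∞) * (ENNReal.ofReal (lam * L) * ENNReal.ofReal V) := by
              push_cast
              ring
  -- conclusion
  intro n m hnm
  obtain ⟨k, rfl⟩ := Nat.exists_eq_add_of_le hnm
  have hk : (n + k - n : ℕ) = k := by omega
  rw [hk]
  refine (hmain n k).trans ?_
  rcases le_or_gt 0 V with hV | hV
  · have : ((k : ℝ≥0∞)) * (ENNReal.ofReal (lam * L) * ENNReal.ofReal V) =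
        ENNReal.ofReal ((k : ℝ) * lam * L * V) := by
      rw [← ENNReal.ofReal_mul (by positivity), ← ENNReal.ofReal_natCast k,
        ← ENNReal.ofReal_mul (by positivity)]
      ring_nf
    rw [this]
  · have h0 : ENNReal.ofReal V = 0 := ENNReal.ofReal_eq_zero.mpr hV.le
    rw [h0, mul_zero, mul_zero]
    exact zero_le
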